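/- Suppose the irreducibility conditions hold: α < 1, β > 0, β+γ < 1, δ > 0, δ+φ < 1, κ < 1. Then A and S have the same characteristic polynomial; in particular, every complex eigenvalue of A is real (the characteristic polynomial of A splits over ℝ). -/

import Mathlib

/-- The 4×4 tridiagonal row-stochastic matrix with parameters α,β,γ,δ,φ,κ. -/
noncomputable def Amat (α β γ δ φ κ : ℝ) : Matrix (Fin 4) (Fin 4) ℝ :=
  !![α, 1-α, 0, 0;
     β, γ, 1-β-γ, 0;
     0, δ, φ, 1-δ-φ;
     0, 0, 1-κ, κ]

/-- The symmetrized tridiagonal matrix S with diagonal (α,γ,φ,κ) and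
off-diagonal entries r₁ = √((1−α)β), r₂ = √((1−β−γ)δ), r₃ = √((1−δ−φ)(1−κ)). -/
noncomputable def Smat (α β γ δ φ κ : ℝ) : Matrix (Fin 4) (Fin 4) ℝ :=
  !![α, Real.sqrt ((1-α)*β), 0, 0;
     Real.sqrt ((1-α)*β), γ, Real.sqrt ((1-β-γ)*δ), 0;
     0, Real.sqrt ((1-β-γ)*δ), φ, Real.sqrt ((1-δ-φ)*(1-κ));
     0, 0, Real.sqrt ((1-δ-φ)*(1-κ)), κ]

open Matrix Polynomial in
lemma my_charpoly_conj_aux {n R : Type*} [Fintype n] [DecidableEq n] [CommRing R]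
    (U V M : Matrix n n R) (hUV : U * V = 1) :
    (U * M * V).charpoly = M.charpoly := by
  let f : Matrix n n R →+* Matrix n n R[X] := RingHom.mapMatrix (Polynomial.C)
  have key : charmatrix (U * M * V) = f U * charmatrix M * f V := by
    unfold charmatrix
    have h1 : f U * Matrix.scalar n (X : R[X]) * f V = Matrix.scalar n (X : R[X]) := by
      rw [(Matrix.scalar_commute (X : R[X]) (fun r => Commute.all _ _) (f U)).symm.eq,
        mul_assoc, ← map_mul f, hUV, _root_.map_one, mul_one]
    rw [mul_sub, sub_mul, h1]
    congr 1
    simp only [RingHom.mapMatrix_apply, f]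
    rw [← Matrix.map_mul, ← Matrix.map_mul]
  rw [Matrix.charpoly, key, det_mul, det_mul]
  have h2 : (f U).det * (f V).det = 1 := by
    rw [← det_mul, ← map_mul f, hUV, _root_.map_one, det_one]
  calc (f U).det * (charmatrix M).det * (f V).det
      = (f U).det * (f V).det * (charmatrix M).det := by ring
    _ = M.charpoly := by rw [h2, one_mul, Matrix.charpoly]

open Matrix Polynomial in
lemma my_charpoly_diagonal {n R : Type*} [Fintype n] [DecidableEq n] [CommRing R] (d : n → R) :
    (Matrix.diagonal d).charpoly = ∏ i, (X - C (d i)) := by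
  rw [Matrix.charpoly]
  have h : charmatrix (Matrix.diagonal d) = Matrix.diagonal fun i => (X : R[X]) - C (d i) := by
    ext i j
    by_cases h : i = j
    · subst h; simp
    · rw [charmatrix_apply_ne _ _ _ h, Matrix.diagonal_apply_ne _ h,
        Matrix.diagonal_apply_ne _ h, map_zero, neg_zero]
  rw [h, det_diagonal]

open Matrix in
lemma my_det_fin_four {R : Type*} [CommRing R] (M : Matrix (Fin 4) (Fin 4) R) :
    M.det =
      M 0 0 * (M 1 1 * (M 2 2 * M 3 3 - M 2 3 * M 3 2) - M 1 2 * (M 2 1 * M 3 3 - M 2 3 * M 3 1)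
        + M 1 3 * (M 2 1 * M 3 2 - M 2 2 * M 3 1))
      - M 0 1 * (M 1 0 * (M 2 2 * M 3 3 - M 2 3 * M 3 2) - M 1 2 * (M 2 0 * M 3 3 - M 2 3 * M 3 0)
        + M 1 3 * (M 2 0 * M 3 2 - M 2 2 * M 3 0))
      + M 0 2 * (M 1 0 * (M 2 1 * M 3 3 - M 2 3 * M 3 1) - M 1 1 * (M 2 0 * M 3 3 - M 2 3 * M 3 0)
        + M 1 3 * (M 2 0 * M 3 1 - M 2 1 * M 3 0))
      - M 0 3 * (M 1 0 * (M 2 1 * M 3 2 - M 2 2 * M 3 1) - M 1 1 * (M 2 0 * M 3 2 - M 2 2 * M 3 0)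
        + M 1 2 * (M 2 0 * M 3 1 - M 2 1 * M 3 0)) := by
  simp [Matrix.det_succ_row_zero, Fin.sum_univ_succ, Fin.succAbove]
  ring

open Matrix Polynomial in
/-- Characteristic polynomial of a general 4×4 tridiagonal matrix. -/
lemma my_charpoly_trid {a b c d p q r s t u : ℝ}
    (M : Matrix (Fin 4) (Fin 4) ℝ)
    (hM : M = !![a, p, 0, 0; q, b, r, 0; 0, s, c, t; 0, 0, u, d]) :
    M.charpoly =
      (X - C a) * ((X - C b) * ((X - C c) * (X - C d) - C t * C u)
        - C r * (C s * (X - C d)))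
      - C p * (C q * ((X - C c) * (X - C d) - C t * C u)) := by
  subst hM
  rw [Matrix.charpoly, my_det_fin_four]
  simp [Matrix.charmatrix_apply, Matrix.diagonal_apply, Matrix.vecHead, Matrix.vecTail]

theorem stmt_2 (α β γ δ φ κ : ℝ)
    (hα : 0 ≤ α) (hα1 : α ≤ 1) (hβ : 0 ≤ β) (hβ1 : β ≤ 1)
    (hγ : 0 ≤ γ) (hγ1 : γ ≤ 1) (hδ : 0 ≤ δ) (hδ1 : δ ≤ 1)
    (hφ : 0 ≤ φ) (hφ1 : φ ≤ 1) (hκ : 0 ≤ κ) (hκ1 : κ ≤ 1)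
    (hβγ : β + γ ≤ 1) (hδφ : δ + φ ≤ 1)
    (irr1 : α < 1) (irr2 : 0 < β) (irr3 : β + γ < 1)
    (irr4 : 0 < δ) (irr5 : δ + φ < 1) (irr6 : κ < 1) :
    Matrix.charpoly (Amat α β γ δ φ κ) = Matrix.charpoly (Smat α β γ δ φ κ) ∧
      Polynomial.Splits (Matrix.charpoly (Amat α β γ δ φ κ)) := by
  classical
  have h1 : Real.sqrt ((1-α)*β) * Real.sqrt ((1-α)*β) = (1-α)*β :=
    Real.mul_self_sqrt (by nlinarith)
  have h2 : Real.sqrt ((1-β-γ)*δ) * Real.sqrt ((1-β-γ)*δ) = (1-β-γ)*δ :=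
    Real.mul_self_sqrt (by nlinarith)
  have h3 : Real.sqrt ((1-δ-φ)*(1-κ)) * Real.sqrt ((1-δ-φ)*(1-κ)) = (1-δ-φ)*(1-κ) :=
    Real.mul_self_sqrt (by nlinarith)
  have hchar : Matrix.charpoly (Amat α β γ δ φ κ) = Matrix.charpoly (Smat α β γ δ φ κ) := by
    rw [my_charpoly_trid (Amat α β γ δ φ κ) rfl, my_charpoly_trid (Smat α β γ δ φ κ) rfl]
    simp only [← mul_assoc, ← Polynomial.C_mul, h1, h2, h3]
  have hsym : (Smat α β γ δ φ κ).IsHermitian := by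
    ext i j
    fin_cases i <;> fin_cases j <;>
      simp [Smat, Matrix.conjTranspose_apply, Matrix.vecHead, Matrix.vecTail]
  refine ⟨hchar, ?_⟩
  rw [hchar]
  have hU := hsym.spectral_theorem
  set U : Matrix (Fin 4) (Fin 4) ℝ := (hsym.eigenvectorUnitary : Matrix (Fin 4) (Fin 4) ℝ)
  have hUV : U * star U = 1 := Matrix.mem_unitaryGroup_iff.mp hsym.eigenvectorUnitary.2
  have hD : (Smat α β γ δ φ κ).charpoly =
      (Matrix.diagonal (RCLike.ofReal ∘ hsym.eigenvalues) : Matrix (Fin 4) (Fin 4) ℝ).charpoly := by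
    conv_lhs => rw [hU]
    exact my_charpoly_conj_aux U (star U) _ hUV
  rw [hD, my_charpoly_diagonal]
  apply Polynomial.Splits.prod
  intro i _
  exact Polynomial.Splits.X_sub_C _
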